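/- Let h, d : U×I → ℝ be C² with Q := d + h > 0, let u̲ : U×I → ℝ² be C² with material derivative D(·) := (·)_t + u̲·∇(·), and suppose the mass equation Q_t + div(Q u̲) = 0 holds (so div u̲ = −DQ/Q). Define δω := (Q/3)·(∇Q ∧ ∇(div u̲)) + (1/2)·(∇(Q·div u̲) ∧ ∇h) + (1/2)·(∇(Q − 2h) ∧ ∇(Dh)). Then at every point: δω = (1/6)·[∇h ∧ ∇(D(d − 2h)) + ∇d ∧ ∇(D(h − 2d))]. In particular, δω ≡ 0 whenever h and d are spatially constant, i.e. h = h(t) and d = d(t). -/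

import Mathlib

noncomputable section

/-- Horizontal space-time points `((x₁,x₂), t)`. -/
abbrev Qt : Type := (ℝ × ℝ) × ℝ

/-- Partial derivative `∂_{x₁}`. -/
noncomputable def pX1 (f : Qt → ℝ) (q : Qt) : ℝ :=
  fderiv ℝ f q (((1 : ℝ), (0 : ℝ)), (0 : ℝ))

/-- Partial derivative `∂_{x₂}`. -/
noncomputable def pX2 (f : Qt → ℝ) (q : Qt) : ℝ :=
  fderiv ℝ f q (((0 : ℝ), (1 : ℝ)), (0 : ℝ))

/-- Partial derivative `∂_t`. -/
noncomputable def pT (f : Qt → ℝ) (q : Qt) : ℝ :=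
  fderiv ℝ f q (((0 : ℝ), (0 : ℝ)), (1 : ℝ))

/-- Horizontal divergence of a plane vector field. -/
noncomputable def divV (w : Qt → ℝ × ℝ) (q : Qt) : ℝ :=
  pX1 (fun z => (w z).1) q + pX2 (fun z => (w z).2) q

/-- Material derivative `Df := f_t + u·∇f`. -/
noncomputable def matD (u : Qt → ℝ × ℝ) (f : Qt → ℝ) (q : Qt) : ℝ :=
  pT f q + (u q).1 * pX1 f q + (u q).2 * pX2 f q

/-- Wedge of spatial gradients `∇f ∧ ∇g := f_{x₁} g_{x₂} − f_{x₂} g_{x₁}`. -/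
noncomputable def wedgeGrad (f g : Qt → ℝ) (q : Qt) : ℝ :=
  pX1 f q * pX2 g q - pX2 f q * pX1 g q

/-- The vorticity correction
`δω := (Q/3)(∇Q ∧ ∇div u̲) + ½ ∇(Q div u̲) ∧ ∇h + ½ ∇(Q−2h) ∧ ∇(Dh)`. -/
noncomputable def deltaOmega (u : Qt → ℝ × ℝ) (h d : Qt → ℝ) (q : Qt) : ℝ :=
  (d q + h q) / 3 * wedgeGrad (fun z => d z + h z) (fun z => divV u z) q
    + (1 / 2) * wedgeGrad (fun z => (d z + h z) * divV u z) h q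
    + (1 / 2) * wedgeGrad (fun z => (d z + h z) - 2 * h z) (fun z => matD u h z) q

open scoped Topology

/- Auxiliary directional-derivative calculus lemmas. -/

lemma pd_add (v : Qt) {f g : Qt → ℝ} {q : Qt} (hf : DifferentiableAt ℝ f q)
    (hg : DifferentiableAt ℝ g q) :
    fderiv ℝ (fun z => f z + g z) q v = fderiv ℝ f q v + fderiv ℝ g q v := by
  rw [fderiv_fun_add hf hg]; simp

lemma pd_mul (v : Qt) {f g : Qt → ℝ} {q : Qt} (hf : DifferentiableAt ℝ f q)
    (hg : DifferentiableAt ℝ g q) :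
    fderiv ℝ (fun z => f z * g z) q v = f q * fderiv ℝ g q v + g q * fderiv ℝ f q v := by
  rw [fderiv_fun_mul hf hg]; simp

lemma pd_sub (v : Qt) {f g : Qt → ℝ} {q : Qt} (hf : DifferentiableAt ℝ f q)
    (hg : DifferentiableAt ℝ g q) :
    fderiv ℝ (fun z => f z - g z) q v = fderiv ℝ f q v - fderiv ℝ g q v := by
  rw [fderiv_fun_sub hf hg]; simp

lemma pd_neg (v : Qt) (f : Qt → ℝ) (q : Qt) :
    fderiv ℝ (fun z => -(f z)) q v = -(fderiv ℝ f q v) := by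
  rw [fderiv_fun_neg]; simp

lemma pd_const_mul (v : Qt) {f : Qt → ℝ} {q : Qt} (c : ℝ) (hf : DifferentiableAt ℝ f q) :
    fderiv ℝ (fun z => c * f z) q v = c * fderiv ℝ f q v := by
  rw [fderiv_const_mul hf c]; simp

lemma contDiffOn_fd_apply {f : Qt → ℝ} {s : Set Qt} (hf : ContDiffOn ℝ 2 f s)
    (hs : IsOpen s) (v : Qt) : ContDiffOn ℝ 1 (fun z => fderiv ℝ f z v) s := by
  have h1 : ContDiffOn ℝ 1 (fun z => fderiv ℝ f z) s :=
    hf.fderiv_of_isOpen hs (by norm_num)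
  exact (ContinuousLinearMap.apply ℝ ℝ v).contDiff.comp_contDiffOn h1

/-- Under the mass equation `Q_t + div(Q u̲) = 0` (with
`Q = d + h > 0`), the vorticity correction `δω` simplifies to
`δω = (1/6)[∇h ∧ ∇(D(d − 2h)) + ∇d ∧ ∇(D(h − 2d))]`; in particular it
vanishes wherever `h` and `d` are spatially constant. -/
theorem delta_omega_simplification
    (U : Set (ℝ × ℝ)) (hU : IsOpen U)
    (I : Set ℝ) (hIopen : IsOpen I) (hIord : I.OrdConnected)
    (h d : Qt → ℝ) (u : Qt → ℝ × ℝ)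
    (hh : ContDiffOn ℝ 2 h (U ×ˢ I)) (hd : ContDiffOn ℝ 2 d (U ×ˢ I))
    (hu : ContDiffOn ℝ 2 u (U ×ˢ I))
    (hQpos : ∀ q ∈ U ×ˢ I, 0 < d q + h q)
    (hmass : ∀ q ∈ U ×ˢ I,
      pT (fun z => d z + h z) q
        + pX1 (fun z => (d z + h z) * (u z).1) q
        + pX2 (fun z => (d z + h z) * (u z).2) q = 0) :
    ∀ q ∈ U ×ˢ I,
      deltaOmega u h d q =
        (1 / 6) * (wedgeGrad h (fun z => matD u (fun w => d w - 2 * h w) z) q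
                 + wedgeGrad d (fun z => matD u (fun w => h w - 2 * d w) z) q)
      ∧ (pX1 h q = 0 → pX2 h q = 0 → pX1 d q = 0 → pX2 d q = 0 →
          deltaOmega u h d q = 0) := by
  intro q hq
  have hsO : IsOpen (U ×ˢ I) := hU.prod hIopen
  have hns : U ×ˢ I ∈ 𝓝 q := hsO.mem_nhds hq
  -- basic differentiability at points of the open set
  have dh : ∀ z ∈ U ×ˢ I, DifferentiableAt ℝ h z := fun z hz =>
    (hh.differentiableOn (by norm_num)).differentiableAt (hsO.mem_nhds hz)
  have dd : ∀ z ∈ U ×ˢ I, DifferentiableAt ℝ d z := fun z hz =>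
    (hd.differentiableOn (by norm_num)).differentiableAt (hsO.mem_nhds hz)
  have du : ∀ z ∈ U ×ˢ I, DifferentiableAt ℝ u z := fun z hz =>
    (hu.differentiableOn (by norm_num)).differentiableAt (hsO.mem_nhds hz)
  have du1 : ∀ z ∈ U ×ˢ I, DifferentiableAt ℝ (fun w => (u w).1) z := fun z hz => (du z hz).fst
  have du2 : ∀ z ∈ U ×ˢ I, DifferentiableAt ℝ (fun w => (u w).2) z := fun z hz => (du z hz).snd
  have dQ : ∀ z ∈ U ×ˢ I, DifferentiableAt ℝ (fun w => d w + h w) z := fun z hz =>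
    (dd z hz).add (dh z hz)
  -- C¹ families
  have cdiv : ContDiffOn ℝ 1 (fun z => divV u z) (U ×ˢ I) := by
    have h1 := contDiffOn_fd_apply hu.fst hsO (((1 : ℝ), (0 : ℝ)), (0 : ℝ))
    have h2 := contDiffOn_fd_apply hu.snd hsO (((0 : ℝ), (1 : ℝ)), (0 : ℝ))
    exact h1.add h2
  have cmh : ContDiffOn ℝ 1 (fun z => matD u h z) (U ×ˢ I) := by
    have h0 := contDiffOn_fd_apply hh hsO (((0 : ℝ), (0 : ℝ)), (1 : ℝ))
    have h1 := (hu.fst.of_le one_le_two).mul (contDiffOn_fd_apply hh hsO (((1 : ℝ), (0 : ℝ)), (0 : ℝ)))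
    have h2 := (hu.snd.of_le one_le_two).mul (contDiffOn_fd_apply hh hsO (((0 : ℝ), (1 : ℝ)), (0 : ℝ)))
    exact (h0.add h1).add h2
  have cmd : ContDiffOn ℝ 1 (fun z => matD u d z) (U ×ˢ I) := by
    have h0 := contDiffOn_fd_apply hd hsO (((0 : ℝ), (0 : ℝ)), (1 : ℝ))
    have h1 := (hu.fst.of_le one_le_two).mul (contDiffOn_fd_apply hd hsO (((1 : ℝ), (0 : ℝ)), (0 : ℝ)))
    have h2 := (hu.snd.of_le one_le_two).mul (contDiffOn_fd_apply hd hsO (((0 : ℝ), (1 : ℝ)), (0 : ℝ)))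
    exact (h0.add h1).add h2
  have ddiv : DifferentiableAt ℝ (fun z => divV u z) q :=
    (cdiv.differentiableOn one_ne_zero).differentiableAt hns
  have dmh : DifferentiableAt ℝ (fun z => matD u h z) q :=
    (cmh.differentiableOn one_ne_zero).differentiableAt hns
  have dmd : DifferentiableAt ℝ (fun z => matD u d z) q :=
    (cmd.differentiableOn one_ne_zero).differentiableAt hns
  -- eventual identity from the mass equation
  have E1 : (fun z => (d z + h z) * divV u z)
      =ᶠ[𝓝 q] (fun z => -(matD u d z + matD u h z)) := by
    filter_upwards [hns] with z hz
    have mass := hmass z hz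
    have m1 : pX1 (fun w => (d w + h w) * (u w).1) z
        = (d z + h z) * pX1 (fun w => (u w).1) z
          + (u z).1 * pX1 (fun w => d w + h w) z := pd_mul _ (dQ z hz) (du1 z hz)
    have m2 : pX2 (fun w => (d w + h w) * (u w).2) z
        = (d z + h z) * pX2 (fun w => (u w).2) z
          + (u z).2 * pX2 (fun w => d w + h w) z := pd_mul _ (dQ z hz) (du2 z hz)
    have q1 : pX1 (fun w => d w + h w) z = pX1 d z + pX1 h z :=
      pd_add _ (dd z hz) (dh z hz)
    have q2 : pX2 (fun w => d w + h w) z = pX2 d z + pX2 h z :=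
      pd_add _ (dd z hz) (dh z hz)
    have qt : pT (fun w => d w + h w) z = pT d z + pT h z :=
      pd_add _ (dd z hz) (dh z hz)
    rw [m1, m2, q1, q2, qt] at mass
    show (d z + h z) * divV u z = -(matD u d z + matD u h z)
    simp only [divV, matD]
    linear_combination mass
  -- eventual linearity identities for the material derivative
  have E2 : (fun z => matD u (fun w => d w - 2 * h w) z)
      =ᶠ[𝓝 q] (fun z => matD u d z - 2 * matD u h z) := by
    filter_upwards [hns] with z hz
    have s1 : pX1 (fun w => d w - 2 * h w) z
        = pX1 d z - pX1 (fun w => 2 * h w) z := pd_sub _ (dd z hz) ((dh z hz).const_mul 2)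
    have s2 : pX2 (fun w => d w - 2 * h w) z
        = pX2 d z - pX2 (fun w => 2 * h w) z := pd_sub _ (dd z hz) ((dh z hz).const_mul 2)
    have st : pT (fun w => d w - 2 * h w) z
        = pT d z - pT (fun w => 2 * h w) z := pd_sub _ (dd z hz) ((dh z hz).const_mul 2)
    have c1 : pX1 (fun w => 2 * h w) z = 2 * pX1 h z := pd_const_mul _ 2 (dh z hz)
    have c2 : pX2 (fun w => 2 * h w) z = 2 * pX2 h z := pd_const_mul _ 2 (dh z hz)
    have ct : pT (fun w => 2 * h w) z = 2 * pT h z := pd_const_mul _ 2 (dh z hz)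
    show matD u (fun w => d w - 2 * h w) z = matD u d z - 2 * matD u h z
    simp only [matD]
    rw [s1, s2, st, c1, c2, ct]; ring
  have E3 : (fun z => matD u (fun w => h w - 2 * d w) z)
      =ᶠ[𝓝 q] (fun z => matD u h z - 2 * matD u d z) := by
    filter_upwards [hns] with z hz
    have s1 : pX1 (fun w => h w - 2 * d w) z
        = pX1 h z - pX1 (fun w => 2 * d w) z := pd_sub _ (dh z hz) ((dd z hz).const_mul 2)
    have s2 : pX2 (fun w => h w - 2 * d w) z
        = pX2 h z - pX2 (fun w => 2 * d w) z := pd_sub _ (dh z hz) ((dd z hz).const_mul 2)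
    have st : pT (fun w => h w - 2 * d w) z
        = pT h z - pT (fun w => 2 * d w) z := pd_sub _ (dh z hz) ((dd z hz).const_mul 2)
    have c1 : pX1 (fun w => 2 * d w) z = 2 * pX1 d z := pd_const_mul _ 2 (dd z hz)
    have c2 : pX2 (fun w => 2 * d w) z = 2 * pX2 d z := pd_const_mul _ 2 (dd z hz)
    have ct : pT (fun w => 2 * d w) z = 2 * pT d z := pd_const_mul _ 2 (dd z hz)
    show matD u (fun w => h w - 2 * d w) z = matD u h z - 2 * matD u d z
    simp only [matD]
    rw [s1, s2, st, c1, c2, ct]; ring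
  -- gradient identities at q
  have g1 : pX1 (fun z => d z + h z) q = pX1 d q + pX1 h q := pd_add _ (dd q hq) (dh q hq)
  have g2 : pX2 (fun z => d z + h z) q = pX2 d q + pX2 h q := pd_add _ (dd q hq) (dh q hq)
  have M1 : pX1 (fun z => (d z + h z) * divV u z) q
      = -(pX1 (fun z => matD u d z) q + pX1 (fun z => matD u h z) q) := by
    have h0 : pX1 (fun z => (d z + h z) * divV u z) q
        = pX1 (fun z => -(matD u d z + matD u h z)) q := by
      simp only [pX1]; rw [E1.fderiv_eq]
    have h1 : pX1 (fun z => -(matD u d z + matD u h z)) q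
        = -(pX1 (fun z => matD u d z + matD u h z) q) := pd_neg _ _ _
    have h2 : pX1 (fun z => matD u d z + matD u h z) q
        = pX1 (fun z => matD u d z) q + pX1 (fun z => matD u h z) q := pd_add _ dmd dmh
    rw [h0, h1, h2]
  have M2 : pX2 (fun z => (d z + h z) * divV u z) q
      = -(pX2 (fun z => matD u d z) q + pX2 (fun z => matD u h z) q) := by
    have h0 : pX2 (fun z => (d z + h z) * divV u z) q
        = pX2 (fun z => -(matD u d z + matD u h z)) q := by
      simp only [pX2]; rw [E1.fderiv_eq]
    have h1 : pX2 (fun z => -(matD u d z + matD u h z)) q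
        = -(pX2 (fun z => matD u d z + matD u h z) q) := pd_neg _ _ _
    have h2 : pX2 (fun z => matD u d z + matD u h z) q
        = pX2 (fun z => matD u d z) q + pX2 (fun z => matD u h z) q := pd_add _ dmd dmh
    rw [h0, h1, h2]
  have Mmul1 : pX1 (fun z => (d z + h z) * divV u z) q
      = (d q + h q) * pX1 (fun z => divV u z) q
        + divV u q * pX1 (fun z => d z + h z) q := pd_mul _ (dQ q hq) ddiv
  have Mmul2 : pX2 (fun z => (d z + h z) * divV u z) q
      = (d q + h q) * pX2 (fun z => divV u z) q
        + divV u q * pX2 (fun z => d z + h z) q := pd_mul _ (dQ q hq) ddiv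
  have hQD1 : (d q + h q) * pX1 (fun z => divV u z) q
      = -(pX1 (fun z => matD u d z) q + pX1 (fun z => matD u h z) q)
        - divV u q * (pX1 d q + pX1 h q) := by
    rw [← g1, ← M1, Mmul1]; ring
  have hQD2 : (d q + h q) * pX2 (fun z => divV u z) q
      = -(pX2 (fun z => matD u d z) q + pX2 (fun z => matD u h z) q)
        - divV u q * (pX2 d q + pX2 h q) := by
    rw [← g2, ← M2, Mmul2]; ring
  have S1 : pX1 (fun z => (d z + h z) - 2 * h z) q = pX1 d q + pX1 h q - 2 * pX1 h q := by
    have a : pX1 (fun z => (d z + h z) - 2 * h z) q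
        = pX1 (fun z => d z + h z) q - pX1 (fun z => 2 * h z) q :=
      pd_sub _ (dQ q hq) ((dh q hq).const_mul 2)
    have b : pX1 (fun z => 2 * h z) q = 2 * pX1 h q := pd_const_mul _ 2 (dh q hq)
    rw [a, b, g1]
  have S2 : pX2 (fun z => (d z + h z) - 2 * h z) q = pX2 d q + pX2 h q - 2 * pX2 h q := by
    have a : pX2 (fun z => (d z + h z) - 2 * h z) q
        = pX2 (fun z => d z + h z) q - pX2 (fun z => 2 * h z) q :=
      pd_sub _ (dQ q hq) ((dh q hq).const_mul 2)
    have b : pX2 (fun z => 2 * h z) q = 2 * pX2 h q := pd_const_mul _ 2 (dh q hq)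
    rw [a, b, g2]
  have W1 : pX1 (fun z => matD u (fun w => d w - 2 * h w) z) q
      = pX1 (fun z => matD u d z) q - 2 * pX1 (fun z => matD u h z) q := by
    have h0 : pX1 (fun z => matD u (fun w => d w - 2 * h w) z) q
        = pX1 (fun z => matD u d z - 2 * matD u h z) q := by
      simp only [pX1]; rw [E2.fderiv_eq]
    have h1 : pX1 (fun z => matD u d z - 2 * matD u h z) q
        = pX1 (fun z => matD u d z) q - pX1 (fun z => 2 * matD u h z) q :=
      pd_sub _ dmd (dmh.const_mul 2)
    have h2 : pX1 (fun z => 2 * matD u h z) q = 2 * pX1 (fun z => matD u h z) q :=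
      pd_const_mul _ 2 dmh
    rw [h0, h1, h2]
  have W2 : pX2 (fun z => matD u (fun w => d w - 2 * h w) z) q
      = pX2 (fun z => matD u d z) q - 2 * pX2 (fun z => matD u h z) q := by
    have h0 : pX2 (fun z => matD u (fun w => d w - 2 * h w) z) q
        = pX2 (fun z => matD u d z - 2 * matD u h z) q := by
      simp only [pX2]; rw [E2.fderiv_eq]
    have h1 : pX2 (fun z => matD u d z - 2 * matD u h z) q
        = pX2 (fun z => matD u d z) q - pX2 (fun z => 2 * matD u h z) q :=
      pd_sub _ dmd (dmh.const_mul 2)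
    have h2 : pX2 (fun z => 2 * matD u h z) q = 2 * pX2 (fun z => matD u h z) q :=
      pd_const_mul _ 2 dmh
    rw [h0, h1, h2]
  have V1 : pX1 (fun z => matD u (fun w => h w - 2 * d w) z) q
      = pX1 (fun z => matD u h z) q - 2 * pX1 (fun z => matD u d z) q := by
    have h0 : pX1 (fun z => matD u (fun w => h w - 2 * d w) z) q
        = pX1 (fun z => matD u h z - 2 * matD u d z) q := by
      simp only [pX1]; rw [E3.fderiv_eq]
    have h1 : pX1 (fun z => matD u h z - 2 * matD u d z) q
        = pX1 (fun z => matD u h z) q - pX1 (fun z => 2 * matD u d z) q :=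
      pd_sub _ dmh (dmd.const_mul 2)
    have h2 : pX1 (fun z => 2 * matD u d z) q = 2 * pX1 (fun z => matD u d z) q :=
      pd_const_mul _ 2 dmd
    rw [h0, h1, h2]
  have V2 : pX2 (fun z => matD u (fun w => h w - 2 * d w) z) q
      = pX2 (fun z => matD u h z) q - 2 * pX2 (fun z => matD u d z) q := by
    have h0 : pX2 (fun z => matD u (fun w => h w - 2 * d w) z) q
        = pX2 (fun z => matD u h z - 2 * matD u d z) q := by
      simp only [pX2]; rw [E3.fderiv_eq]
    have h1 : pX2 (fun z => matD u h z - 2 * matD u d z) q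
        = pX2 (fun z => matD u h z) q - pX2 (fun z => 2 * matD u d z) q :=
      pd_sub _ dmh (dmd.const_mul 2)
    have h2 : pX2 (fun z => 2 * matD u d z) q = 2 * pX2 (fun z => matD u d z) q :=
      pd_const_mul _ 2 dmd
    rw [h0, h1, h2]
  have main : deltaOmega u h d q =
      (1 / 6) * (wedgeGrad h (fun z => matD u (fun w => d w - 2 * h w) z) q
               + wedgeGrad d (fun z => matD u (fun w => h w - 2 * d w) z) q) := by
    simp only [deltaOmega, wedgeGrad]
    rw [g1, g2, M1, M2, S1, S2, W1, W2, V1, V2]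
    linear_combination ((pX1 d q + pX1 h q) / 3) * hQD2 - ((pX2 d q + pX2 h q) / 3) * hQD1
  refine ⟨main, fun p1 p2 p3 p4 => ?_⟩
  rw [main]
  simp only [wedgeGrad, p1, p2, p3, p4]
  ring

end
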